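/- Let P be an n×n row-stochastic matrix with stationary distribution ν (νᵀ P = νᵀ) having all components positive, N = diag(ν), γ ∈ [0,1), and let Φ be an n×K real matrix with linearly independent columns. Then the K×K matrix Φᵀ N (I − γP) Φ is invertible. -/

import Mathlib

open Matrix

private lemma quad_pos {n : ℕ}
    (P : Matrix (Fin n) (Fin n) ℝ)
    (hP_nonneg : ∀ i j, 0 ≤ P i j)
    (hP_rowsum : ∀ i, ∑ j, P i j = 1)
    (ν : Fin n → ℝ)
    (hν_pos : ∀ i, 0 < ν i)
    (hν_stat : Matrix.vecMul ν P = ν)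
    (γ : ℝ) (hγ0 : 0 ≤ γ) (hγ1 : γ < 1)
    (x : Fin n → ℝ) (hx : x ≠ 0) :
    0 < ∑ i, ν i * (x i * (x i - γ * (P.mulVec x) i)) := by
  set y := P.mulVec x with hy
  set S := ∑ i, ν i * x i ^ 2 with hS
  have hS_pos : 0 < S := by
    have hne : ∃ i, x i ≠ 0 := by
      by_contra h
      push_neg at h
      exact hx (funext h)
    obtain ⟨i0, hi0⟩ := hne
    refine Finset.sum_pos' (fun i _ => mul_nonneg (hν_pos i).le (sq_nonneg _)) ⟨i0, Finset.mem_univ _, ?_⟩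
    exact mul_pos (hν_pos i0) (lt_of_le_of_ne (sq_nonneg _) (Ne.symm (pow_ne_zero 2 hi0)))
  -- Jensen: ν-weighted second moment of y is ≤ S
  have hU : ∑ i, ν i * y i ^ 2 ≤ S := by
    have hstep : ∀ i, y i ^ 2 ≤ ∑ j, P i j * x j ^ 2 := by
      intro i
      have := Finset.sum_sq_le_sum_mul_sum_of_sq_eq_mul Finset.univ
        (r := fun j => P i j * x j) (f := fun j => P i j) (g := fun j => P i j * x j ^ 2)
        (fun j _ => hP_nonneg i j) (fun j _ => mul_nonneg (hP_nonneg i j) (sq_nonneg _))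
        (fun j _ => by ring)
      simpa [hy, Matrix.mulVec, dotProduct, hP_rowsum i] using this
    calc ∑ i, ν i * y i ^ 2 ≤ ∑ i, ν i * ∑ j, P i j * x j ^ 2 := by
          exact Finset.sum_le_sum fun i _ => mul_le_mul_of_nonneg_left (hstep i) (hν_pos i).le
      _ = ∑ j, (∑ i, ν i * P i j) * x j ^ 2 := by
          simp_rw [Finset.mul_sum]
          rw [Finset.sum_comm]
          congr 1; ext j
          rw [Finset.sum_mul]
          congr 1; ext i; ring
      _ = S := by
          have : ∀ j, ∑ i, ν i * P i j = ν j := by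
            intro j
            have := congrFun hν_stat j
            simpa [Matrix.vecMul, dotProduct] using this
          simp_rw [this, hS]
  -- Cauchy-Schwarz: cross term
  have hT : ∑ i, ν i * (x i * y i) ≤ S := by
    have hcs := Finset.sum_sq_le_sum_mul_sum_of_sq_eq_mul Finset.univ
      (r := fun i => ν i * (x i * y i)) (f := fun i => ν i * x i ^ 2) (g := fun i => ν i * y i ^ 2)
      (fun i _ => mul_nonneg (hν_pos i).le (sq_nonneg _))
      (fun i _ => mul_nonneg (hν_pos i).le (sq_nonneg _))
      (fun i _ => by ring)
    have h2 : (∑ i, ν i * (x i * y i)) ^ 2 ≤ S * S :=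
      hcs.trans (mul_le_mul_of_nonneg_left hU (le_trans (by positivity) le_rfl))
    nlinarith [hS_pos]
  have expand : ∑ i, ν i * (x i * (x i - γ * y i))
      = S - γ * ∑ i, ν i * (x i * y i) := by
    rw [hS, Finset.mul_sum, ← Finset.sum_sub_distrib]
    congr 1; ext i; ring
  rw [expand]
  nlinarith [hT, hS_pos]

/-- For a row-stochastic `P` with everywhere-positive stationary
distribution `ν`, `N = diag(ν)`, `γ ∈ [0,1)`, and `Φ` with linearly independent columns,
the `K×K` matrix `Φᵀ N (I − γP) Φ` is invertible. -/
theorem projected_bellman_matrix_invertible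
    {n K : ℕ}
    (P : Matrix (Fin n) (Fin n) ℝ)
    (hP_nonneg : ∀ i j, 0 ≤ P i j)
    (hP_rowsum : ∀ i, ∑ j, P i j = 1)
    (ν : Fin n → ℝ)
    (hν_pos : ∀ i, 0 < ν i)
    (hν_sum : ∑ i, ν i = 1)
    (hν_stat : Matrix.vecMul ν P = ν)
    (N : Matrix (Fin n) (Fin n) ℝ) (hN : N = Matrix.diagonal ν)
    (γ : ℝ) (hγ0 : 0 ≤ γ) (hγ1 : γ < 1)
    (Φ : Matrix (Fin n) (Fin K) ℝ)
    (hΦ : LinearIndependent ℝ Φᵀ) :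
    IsUnit (Φᵀ * N * (1 - γ • P) * Φ) := by
  rw [Matrix.isUnit_iff_isUnit_det, isUnit_iff_ne_zero]
  intro hdet
  obtain ⟨c, hc_ne, hc0⟩ := (Matrix.exists_mulVec_eq_zero_iff).mpr hdet
  set x := Φ.mulVec c with hxdef
  have hx_ne : x ≠ 0 := by
    intro hx0
    apply hc_ne
    have := Fintype.linearIndependent_iff.mp hΦ c ?_
    · funext k; exact this k
    · funext i
      have := congrFun hx0 i
      simpa [hxdef, Matrix.mulVec, dotProduct, mul_comm] using this
  -- quadratic form equals zero
  have hq0 : x ⬝ᵥ (N * (1 - γ • P)).mulVec x = 0 := by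
    have h : c ⬝ᵥ (Φᵀ * N * (1 - γ • P) * Φ).mulVec c = 0 := by
      rw [hc0]; simp
    rw [Matrix.mul_assoc Φᵀ N (1 - γ • P), ← Matrix.mulVec_mulVec,
      Matrix.dotProduct_mulVec, ← Matrix.vecMul_vecMul, Matrix.vecMul_transpose] at h
    rw [Matrix.dotProduct_mulVec, hxdef]
    exact h
  -- but the quadratic form is positive
  have hq_pos : 0 < x ⬝ᵥ (N * (1 - γ • P)).mulVec x := by
    have hform : x ⬝ᵥ (N * (1 - γ • P)).mulVec x
        = ∑ i, ν i * (x i * (x i - γ * (P.mulVec x) i)) := by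
      rw [← Matrix.mulVec_mulVec, hN]
      simp only [Matrix.sub_mulVec, Matrix.one_mulVec, Matrix.smul_mulVec]
      simp only [dotProduct, Matrix.mulVec_diagonal, Pi.sub_apply, Pi.smul_apply,
        smul_eq_mul]
      congr 1; ext i; ring
    rw [hform]
    exact quad_pos P hP_nonneg hP_rowsum ν hν_pos hν_stat γ hγ0 hγ1 x hx_ne
  exact hq_pos.ne' hq0
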